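/- For all a > 0 and b ≥ 0, ∫_0^∞ t^{−1/2} e^{−a·t − b/t} dt = √(π/a) · e^{−2√(a·b)}, where the integral is the Lebesgue integral over (0,∞). -/

import Mathlib

open MeasureTheory Filter Set
section AuxRpowNegHalf
open Real


-- image of Ioi 0 under squaring
lemma aux_sq_image : (fun u : ℝ => u ^ 2) '' Ioi 0 = Ioi 0 := by
  ext x
  constructor
  · rintro ⟨u, hu, rfl⟩; exact pow_pos (mem_Ioi.mp hu) 2
  · intro hx; exact ⟨Real.sqrt x, Real.sqrt_pos.mpr hx, Real.sq_sqrt hx.le⟩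

lemma aux_sq_injOn : InjOn (fun u : ℝ => u ^ 2) (Ioi 0) := by
  intro u hu v hv h
  simp only [mem_Ioi] at hu hv
  have h2 : (u - v) * (u + v) = 0 := by simp only at h; nlinarith
  rcases mul_eq_zero.mp h2 with h3 | h3
  · linarith
  · linarith

-- substitution t = u^2
lemma aux_subst_sq (a b : ℝ) (ha : 0 < a) (hb : 0 ≤ b) :
    ∫ t in Set.Ioi (0 : ℝ), t ^ (-(1/2 : ℝ)) * Real.exp (-(a * t) - b / t)
      = 2 * ∫ u in Set.Ioi (0 : ℝ), Real.exp (-(a * u ^ 2) - b / u ^ 2) := by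
  have hderiv : ∀ u ∈ Ioi (0:ℝ), HasDerivWithinAt (fun u : ℝ => u ^ 2) (2 * u) (Ioi 0) u := by
    intro u hu
    simpa using (hasDerivAt_pow 2 u).hasDerivWithinAt
  have := integral_image_eq_integral_abs_deriv_smul measurableSet_Ioi hderiv aux_sq_injOn
    (fun t => t ^ (-(1/2 : ℝ)) * Real.exp (-(a * t) - b / t))
  rw [aux_sq_image] at this
  rw [this, ← integral_const_mul]
  apply setIntegral_congr_fun measurableSet_Ioi
  intro u hu
  simp only [mem_Ioi] at hu
  have h1 : (u ^ 2 : ℝ) ^ (-(1/2 : ℝ)) = u⁻¹ := by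
    rw [← Real.rpow_natCast u 2, ← Real.rpow_mul hu.le]
    norm_num
    exact (Real.rpow_neg_one u)
  simp only [smul_eq_mul]
  rw [h1, abs_of_pos (by linarith : (0:ℝ) < 2*u)]
  field_simp


-- swap substitution u ↦ d/(c u)
lemma aux_swap (c d : ℝ) (hc : 0 < c) (hd : 0 < d) :
    ∫ u in Set.Ioi (0:ℝ), Real.exp (-(c*u - d/u)^2)
      = ∫ u in Set.Ioi (0:ℝ), (d/(c*u^2)) * Real.exp (-(c*u - d/u)^2) := by
  have himg : (fun u : ℝ => d/(c*u)) '' Ioi 0 = Ioi 0 := by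
    ext x
    constructor
    · rintro ⟨u, hu, rfl⟩
      simp only [mem_Ioi] at hu ⊢
      exact div_pos hd (by positivity)
    · intro hx
      simp only [mem_Ioi] at hx
      refine ⟨d/(c*x), by simp only [mem_Ioi]; exact div_pos hd (by positivity), ?_⟩
      field_simp
  have hinj : InjOn (fun u : ℝ => d/(c*u)) (Ioi 0) := by
    intro u hu v hv h
    simp only [mem_Ioi] at hu hv
    simp only at h
    rw [div_eq_div_iff (by positivity) (by positivity)] at h
    exact (mul_left_cancel₀ hc.ne' (mul_left_cancel₀ hd.ne' h)).symm
  have hderiv : ∀ u ∈ Ioi (0:ℝ), HasDerivWithinAt (fun u : ℝ => d/(c*u))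
      (-(d/(c*u^2))) (Ioi 0) u := by
    intro u hu
    simp only [mem_Ioi] at hu
    have h1 : HasDerivAt (fun u : ℝ => (d/c) * u⁻¹) ((d/c) * (-(u^2)⁻¹)) u :=
      (hasDerivAt_inv hu.ne').const_mul (d/c)
    have heq : (fun u : ℝ => d/(c*u)) = fun u : ℝ => (d/c) * u⁻¹ := by
      funext x; rw [div_mul_eq_div_div, div_eq_mul_inv]
    have h2 : HasDerivAt (fun u : ℝ => d/(c*u)) (-(d/(c*u^2))) u := by
      rw [heq, show -(d/(c*u^2)) = (d/c) * (-(u^2)⁻¹) by field_simp]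
      exact h1
    exact h2.hasDerivWithinAt
  have := integral_image_eq_integral_abs_deriv_smul measurableSet_Ioi hderiv hinj
    (fun u => Real.exp (-(c*u - d/u)^2))
  rw [himg] at this
  rw [this]
  apply setIntegral_congr_fun measurableSet_Ioi
  intro u hu
  simp only [mem_Ioi] at hu
  simp only [smul_eq_mul]
  rw [abs_neg, abs_of_pos (by positivity : (0:ℝ) < d/(c*u^2))]
  congr 2
  have : c * (d/(c*u)) - d/(d/(c*u)) = -(c*u - d/u) := by field_simp; ring
  rw [this, neg_sq]


lemma aux_gauss (c d : ℝ) (hc : 0 < c) (hd : 0 < d) :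
    Real.sqrt Real.pi
      = ∫ u in Set.Ioi (0:ℝ), (c + d/u^2) * Real.exp (-(c*u - d/u)^2) := by
  have himg : (fun u : ℝ => c*u - d/u) '' Ioi 0 = univ := by
    ext y
    simp only [mem_univ, iff_true]
    set s := Real.sqrt (y^2 + 4*c*d) with hs
    have hs2 : s^2 = y^2 + 4*c*d := Real.sq_sqrt (by positivity)
    have hsy : -y < s := by
      rcases le_or_gt y 0 with hy | hy
      · have : |y| < s := by
          rw [← Real.sqrt_sq_eq_abs]
          exact Real.sqrt_lt_sqrt (by positivity) (by nlinarith)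
        calc -y ≤ |y| := neg_le_abs y
        _ < s := this
      · have : (0:ℝ) ≤ s := Real.sqrt_nonneg _
        linarith
    have hu : 0 < (y + s)/(2*c) := by
      apply div_pos (by linarith) (by linarith)
    refine ⟨(y + s)/(2*c), hu, ?_⟩
    have hys : (0:ℝ) < y + s := by linarith
    have hne : (y + s)/(2*c) ≠ 0 := hu.ne'
    field_simp
    nlinarith [hs2]
  have hinj : InjOn (fun u : ℝ => c*u - d/u) (Ioi 0) := by
    have hmono : StrictMonoOn (fun u : ℝ => c*u - d/u) (Ioi 0) := by
      intro u hu v hv huv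
      simp only [mem_Ioi] at hu hv
      have h1 : c*u < c*v := by nlinarith
      have h2 : d/v < d/u := div_lt_div_of_pos_left hd hu huv
      simp only
      linarith
    exact hmono.injOn
  have hderiv : ∀ u ∈ Ioi (0:ℝ), HasDerivWithinAt (fun u : ℝ => c*u - d/u)
      (c + d/u^2) (Ioi 0) u := by
    intro u hu
    simp only [mem_Ioi] at hu
    have h1 : HasDerivAt (fun u : ℝ => c*u - d*u⁻¹) (c*1 - d*(-(u^2)⁻¹)) u :=
      ((hasDerivAt_id u).const_mul c).sub ((hasDerivAt_inv hu.ne').const_mul d)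
    have h2 : HasDerivAt (fun u : ℝ => c*u - d/u) (c + d/u^2) u := by
      have heq : (fun u : ℝ => c*u - d/u) = fun u : ℝ => c*u - d*u⁻¹ := by
        funext x; rw [div_eq_mul_inv]
      rw [heq, show c + d/u^2 = c*1 - d*(-(u^2)⁻¹) by field_simp; ring]
      exact h1
    exact h2.hasDerivWithinAt
  have := integral_image_eq_integral_abs_deriv_smul measurableSet_Ioi hderiv hinj
    (fun s => Real.exp (-s^2))
  rw [himg] at this
  have hg : ∫ s : ℝ, Real.exp (-s^2) = Real.sqrt Real.pi := by
    have h := integral_gaussian 1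
    rw [div_one] at h
    rw [← h]
    congr 1
    funext x
    rw [neg_mul, one_mul]
  rw [Measure.restrict_univ] at this
  rw [← hg, this]
  apply setIntegral_congr_fun measurableSet_Ioi
  intro u hu
  simp only [mem_Ioi] at hu
  simp only [smul_eq_mul]
  rw [abs_of_pos (by positivity : (0:ℝ) < c + d/u^2)]


lemma aux_key (c d u : ℝ) (hu : 0 < u) :
    (c*u - d/u)^2 = c^2*u^2 + d^2/u^2 - 2*(c*d) := by
  field_simp
  ring

lemma aux_meas (c d : ℝ) :
    AEStronglyMeasurable (fun u : ℝ => Real.exp (-(c*u - d/u)^2))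
      (volume.restrict (Ioi 0)) := by
  apply Measurable.aestronglyMeasurable
  apply Measurable.exp
  apply Measurable.neg
  apply Measurable.pow _ measurable_const
  exact (measurable_const.mul measurable_id).sub (measurable_const.mul measurable_inv)

lemma aux_int1 (c d : ℝ) (hc : 0 < c) (hd : 0 ≤ d) :
    IntegrableOn (fun u : ℝ => Real.exp (-(c*u - d/u)^2)) (Ioi 0) := by
  have hbase : Integrable (fun u : ℝ => Real.exp (2*(c*d)) * Real.exp (-(c^2) * u^2)) :=
    (integrable_exp_neg_mul_sq (by positivity)).const_mul _
  refine Integrable.mono' hbase.integrableOn (aux_meas c d) ?_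
  rw [ae_restrict_iff' measurableSet_Ioi]
  filter_upwards with u hu
  simp only [mem_Ioi] at hu
  rw [Real.norm_eq_abs, abs_of_pos (Real.exp_pos _), ← Real.exp_add]
  apply Real.exp_le_exp.mpr
  rw [aux_key c d u hu]
  have : 0 ≤ d^2/u^2 := by positivity
  nlinarith

lemma aux_int2 (c d : ℝ) (hc : 0 < c) (hd : 0 < d) :
    IntegrableOn (fun u : ℝ => d/u^2 * Real.exp (-(c*u - d/u)^2)) (Ioi 0) := by
  have hbase : Integrable (fun u : ℝ => (Real.exp (2*(c*d)) / d) * Real.exp (-(c^2) * u^2)) :=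
    (integrable_exp_neg_mul_sq (by positivity)).const_mul _
  refine Integrable.mono' hbase.integrableOn ?_ ?_
  · apply AEStronglyMeasurable.mul _ (aux_meas c d)
    exact (measurable_const.div (measurable_id.pow_const 2)).aestronglyMeasurable
  rw [ae_restrict_iff' measurableSet_Ioi]
  filter_upwards with u hu
  simp only [mem_Ioi] at hu
  have h0 : (0:ℝ) < d/u^2 := by positivity
  rw [Real.norm_eq_abs, abs_of_pos (by positivity)]
  rw [aux_key c d u hu]
  have hx : (0:ℝ) < d^2/u^2 := by positivity
  -- exp(-(c²u² + d²/u² - 2cd)) = exp(2cd) * exp(-c²u²) * exp(-d²/u²)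
  have hsplit : Real.exp (-(c^2*u^2 + d^2/u^2 - 2*(c*d)))
      = Real.exp (2*(c*d)) * Real.exp (-(c^2)*u^2) * Real.exp (-(d^2/u^2)) := by
    rw [← Real.exp_add, ← Real.exp_add]; ring_nf
  rw [hsplit]
  have hle : Real.exp (-(d^2/u^2)) ≤ (d^2/u^2)⁻¹ := by
    rw [Real.exp_neg]
    apply inv_anti₀ hx
    calc d^2/u^2 ≤ d^2/u^2 + 1 := by linarith
    _ ≤ Real.exp (d^2/u^2) := Real.add_one_le_exp _
  have h1 : d/u^2 * (Real.exp (2*(c*d)) * Real.exp (-(c^2)*u^2) * Real.exp (-(d^2/u^2)))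
      ≤ d/u^2 * (Real.exp (2*(c*d)) * Real.exp (-(c^2)*u^2) * (d^2/u^2)⁻¹) := by
    apply mul_le_mul_of_nonneg_left _ h0.le
    apply mul_le_mul_of_nonneg_left hle (by positivity)
  calc d/u^2 * (Real.exp (2*(c*d)) * Real.exp (-(c^2)*u^2) * Real.exp (-(d^2/u^2)))
      ≤ d/u^2 * (Real.exp (2*(c*d)) * Real.exp (-(c^2)*u^2) * (d^2/u^2)⁻¹) := h1
    _ = Real.exp (2*(c*d)) / d * Real.exp (-(c^2)*u^2) := by
        field_simp

lemma aux_J (c d : ℝ) (hc : 0 < c) (hd : 0 < d) :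
    ∫ u in Set.Ioi (0:ℝ), Real.exp (-(c*u - d/u)^2)
      = Real.sqrt Real.pi / (2*c) := by
  set J := ∫ u in Set.Ioi (0:ℝ), Real.exp (-(c*u - d/u)^2) with hJ
  have h1 := aux_gauss c d hc hd
  have hsplit : ∫ u in Set.Ioi (0:ℝ), (c + d/u^2) * Real.exp (-(c*u - d/u)^2)
      = (∫ u in Set.Ioi (0:ℝ), c * Real.exp (-(c*u - d/u)^2))
        + ∫ u in Set.Ioi (0:ℝ), d/u^2 * Real.exp (-(c*u - d/u)^2) := by
    rw [← integral_add ((aux_int1 c d hc hd.le).const_mul c) (aux_int2 c d hc hd)]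
    apply setIntegral_congr_fun measurableSet_Ioi
    intro u _
    ring
  have h2 : ∫ u in Set.Ioi (0:ℝ), c * Real.exp (-(c*u - d/u)^2) = c * J := by
    rw [integral_const_mul]
  have h3 : ∫ u in Set.Ioi (0:ℝ), d/u^2 * Real.exp (-(c*u - d/u)^2) = c * J := by
    have key : (fun u : ℝ => d/u^2 * Real.exp (-(c*u - d/u)^2))
        = fun u : ℝ => c * (d/(c*u^2) * Real.exp (-(c*u - d/u)^2)) := by
      funext u
      rw [← mul_assoc]
      congr 1
      rw [← mul_div_assoc]
      exact (mul_div_mul_left d (u^2) hc.ne').symm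
    rw [key, integral_const_mul, ← aux_swap c d hc hd]
  rw [hsplit, h2, h3] at h1
  have : Real.sqrt Real.pi = 2 * c * J := by linarith
  rw [this]
  field_simp

lemma aux_G (a b : ℝ) (ha : 0 < a) (hb : 0 < b) :
    ∫ u in Set.Ioi (0:ℝ), Real.exp (-(a * u ^ 2) - b / u ^ 2)
      = Real.sqrt Real.pi / (2 * Real.sqrt a) * Real.exp (-2 * Real.sqrt (a*b)) := by
  set c := Real.sqrt a with hcd
  set d := Real.sqrt b with hdd
  have hc : 0 < c := Real.sqrt_pos.mpr ha
  have hd : 0 < d := Real.sqrt_pos.mpr hb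
  have hc2 : c^2 = a := Real.sq_sqrt ha.le
  have hd2 : d^2 = b := Real.sq_sqrt hb.le
  have hcdml : c * d = Real.sqrt (a*b) := (Real.sqrt_mul ha.le b).symm
  have hcongr : ∀ u ∈ Ioi (0:ℝ), Real.exp (-(a * u ^ 2) - b / u ^ 2)
      = Real.exp (-2 * Real.sqrt (a*b)) * Real.exp (-(c*u - d/u)^2) := by
    intro u hu
    simp only [mem_Ioi] at hu
    rw [← Real.exp_add, aux_key c d u hu, hc2, hd2, ← hcdml]
    congr 1
    ring
  rw [setIntegral_congr_fun measurableSet_Ioi hcongr, integral_const_mul,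
    aux_J c d hc hd]
  ring

end AuxRpowNegHalf

/-- For all `a > 0` and `b ≥ 0`,
`∫_0^∞ t^{-1/2} e^{-a t - b/t} dt = √(π/a) · e^{-2√(ab)}`. -/
theorem integral_rpow_neg_half_exp (a b : ℝ) (ha : 0 < a) (hb : 0 ≤ b) :
    ∫ t in Set.Ioi (0 : ℝ), t ^ (-(1/2 : ℝ)) * Real.exp (-(a * t) - b / t)
      = Real.sqrt (Real.pi / a) * Real.exp (-2 * Real.sqrt (a * b)) := by
  rw [aux_subst_sq a b ha hb]
  have hpia : Real.sqrt (Real.pi / a) = Real.sqrt Real.pi / Real.sqrt a :=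
    Real.sqrt_div Real.pi_pos.le a
  rcases hb.eq_or_lt with rfl | hb'
  · have : ∫ u in Set.Ioi (0:ℝ), Real.exp (-(a * u ^ 2) - 0 / u ^ 2)
        = ∫ u in Set.Ioi (0:ℝ), Real.exp (-a * u ^ 2) := by
      apply setIntegral_congr_fun measurableSet_Ioi
      intro u _
      norm_num
    rw [this, integral_gaussian_Ioi a]
    rw [mul_zero, Real.sqrt_zero, mul_zero, Real.exp_zero, mul_one]
    ring
  · rw [aux_G a b ha hb', hpia]
    have : Real.sqrt a ≠ 0 := (Real.sqrt_pos.mpr ha).ne'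
    field_simp
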